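/- (Gerzon bound, complex case) If v_1, ..., v_N ∈ C^r are unit vectors with |⟨v_i, v_j⟩| = α for all i ≠ j, where 0 ≤ α < 1, then N ≤ r². -/

import Mathlib

open BigOperators

lemma swap4 {M : Type*} [AddCommMonoid M] {a b : ℕ} (f : Fin a → Fin a → Fin b → Fin b → M) :
    ∑ x, ∑ y, ∑ i, ∑ j, f x y i j = ∑ i, ∑ j, ∑ x, ∑ y, f x y i j := by
  have h1 : ∑ p : Fin a × Fin a, ∑ q : Fin b × Fin b, f p.1 p.2 q.1 q.2
      = ∑ x, ∑ y, ∑ i, ∑ j, f x y i j := by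
    rw [Fintype.sum_prod_type]
    exact Finset.sum_congr rfl fun x _ => Finset.sum_congr rfl fun y _ => by
      rw [Fintype.sum_prod_type]
  have h2 : ∑ q : Fin b × Fin b, ∑ p : Fin a × Fin a, f p.1 p.2 q.1 q.2
      = ∑ i, ∑ j, ∑ x, ∑ y, f x y i j := by
    rw [Fintype.sum_prod_type]
    exact Finset.sum_congr rfl fun i _ => Finset.sum_congr rfl fun j _ => by
      rw [Fintype.sum_prod_type]
  rw [← h1, ← h2]
  exact Finset.sum_comm

/-- Gerzon bound, complex case. -/
theorem stmt_3 (N r : ℕ) (v : Fin N → Fin r → ℂ)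
    (hunit : ∀ i, ∑ k, ‖v i k‖ ^ 2 = 1)
    (α : ℝ) (hα0 : 0 ≤ α) (hα1 : α < 1)
    (heq : ∀ i j : Fin N, i ≠ j → ‖∑ k, (starRingEnd ℂ) (v i k) * v j k‖ = α) :
    N ≤ r ^ 2 := by
  classical
  set conj := starRingEnd ℂ with hconj
  set T : Fin N → Fin N → ℂ := fun i j => ∑ k, conj (v i k) * v j k with hTDef
  have hTii : ∀ i, T i i = 1 := by
    intro i
    have : T i i = ((∑ k, ‖v i k‖ ^ 2 : ℝ) : ℂ) := by
      push_cast
      refine Finset.sum_congr rfl fun k _ => ?_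
      rw [Complex.conj_mul']
    rw [this, hunit i]; norm_num
  have hG : ∀ i j, conj (T i j) * T i j = ((if i = j then (1:ℝ) else α^2) : ℂ) := by
    intro i j
    rw [Complex.conj_mul']
    by_cases h : i = j
    · subst h; simp [hTii i]
    · simp [h, show ‖T i j‖ = α from heq i j h]
  set w : Fin N → (Fin r × Fin r) → ℂ := fun i p => conj (v i p.1) * v i p.2 with hwDef
  have hli : LinearIndependent ℂ w := by
    rw [Fintype.linearIndependent_iff]
    intro c hc i0
    have hc' : ∀ p : Fin r × Fin r, ∑ i, c i * w i p = 0 := by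
      intro p
      have := congrFun hc p
      simpa using this
    have key : ∑ i, ∑ j, conj (c i) * c j * (conj (T i j) * T i j) = 0 := by
      have h0 : ∑ p : Fin r × Fin r, conj (∑ i, c i * w i p) * (∑ j, c j * w j p) = 0 := by
        simp [hc']
      rw [← h0]
      simp only [map_sum, map_mul, Finset.sum_mul_sum, Complex.conj_conj, hwDef, hTDef, hconj]
      rw [Fintype.sum_prod_type]
      rw [swap4 (f := fun x y i j => (starRingEnd ℂ) (c i) *
        (v i x * (starRingEnd ℂ) (v i y)) * (c j * ((starRingEnd ℂ) (v j x) * v j y)))]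
      refine Finset.sum_congr rfl fun i _ => Finset.sum_congr rfl fun j _ => ?_
      rw [Finset.mul_sum]
      refine Finset.sum_congr rfl fun x _ => ?_
      rw [Finset.mul_sum]
      refine Finset.sum_congr rfl fun y _ => ?_
      ring
    have main : ∑ i, ∑ j, conj (c i) * c j * (conj (T i j) * T i j)
        = (1 - (α:ℂ)^2) * ∑ i, conj (c i) * c i
          + (α:ℂ)^2 * (conj (∑ i, c i) * ∑ i, c i) := by
      simp only [hG]
      have step : ∀ i : Fin N, ∑ j, conj (c i) * c j * ((if i = j then ((1:ℝ):ℂ) else ((α:ℝ):ℂ)^2))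
          = (1 - (α:ℂ)^2) * (conj (c i) * c i) + (α:ℂ)^2 * (conj (c i) * ∑ j, c j) := by
        intro i
        have : ∀ j : Fin N, conj (c i) * c j * ((if i = j then ((1:ℝ):ℂ) else ((α:ℝ):ℂ)^2))
            = (if i = j then (1 - (α:ℂ)^2) * (conj (c i) * c j) else 0)
              + (α:ℂ)^2 * (conj (c i) * c j) := by
          intro j
          by_cases h : i = j <;> simp [h] <;> ring
        simp_rw [this, Finset.sum_add_distrib, Finset.sum_ite_eq, Finset.mem_univ, if_pos,
          ← Finset.mul_sum]
      simp_rw [step, Finset.sum_add_distrib, ← Finset.mul_sum, map_sum, Finset.sum_mul]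
    rw [key] at main
    have main' : (((1 - α^2) * ∑ i, ‖c i‖^2 + α^2 * ‖∑ i, c i‖^2 : ℝ) : ℂ) = 0 := by
      rw [main]
      simp only [hconj, Complex.conj_mul']
      push_cast
      ring
    have hreal : (1 - α^2) * ∑ i, ‖c i‖^2 + α^2 * ‖∑ i, c i‖^2 = 0 := by
      exact_mod_cast main'
    have hα2 : α^2 < 1 := by nlinarith
    have hS : 0 ≤ ∑ i, ‖c i‖^2 := Finset.sum_nonneg fun i _ => sq_nonneg _
    have hQ : 0 ≤ α^2 * ‖∑ i, c i‖^2 := mul_nonneg (sq_nonneg _) (sq_nonneg _)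
    have h1 : ∑ i, ‖c i‖^2 = 0 := by nlinarith
    have h2 : ‖c i0‖^2 = 0 :=
      (Finset.sum_eq_zero_iff_of_nonneg fun i _ => sq_nonneg ‖c i‖).mp h1 i0 (Finset.mem_univ i0)
    have h3 : ‖c i0‖ = 0 := by
      have := sq_eq_zero_iff.mp h2
      exact this
    exact norm_eq_zero.mp h3
  have hcard := hli.fintype_card_le_finrank
  simpa [pow_two] using hcard
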